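/- arXiv:1907.10534 — 4 statements merged into one kernel-verified Lean document; each statement's English description precedes it below -/
import Mathlib

section
/- Every real number x in the interval [-s/(s+1), 1/(s+1)] can be represented as x = Σ_{n=1}^∞ α_n / (-s)^n where each digit α_n belongs to {0,1,...,s-1}. -/
noncomputable def negaRem (s : ℕ) (x : ℝ) : ℕ → ℝ
  | 0 => x
  | n + 1 =>
      -(s : ℝ) * negaRem s x n -
        ((⌈-(s : ℝ) * negaRem s x n - 1 / ((s : ℝ) + 1)⌉).toNat : ℝ)

noncomputable def negaDigit (s : ℕ) (x : ℝ) (n : ℕ) : ℕ :=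
  (⌈-(s : ℝ) * negaRem s x n - 1 / ((s : ℝ) + 1)⌉).toNat

lemma negaStep (s : ℕ) (hs : 1 < s) (r : ℝ)
    (hr : r ∈ Set.Icc (-(s : ℝ) / ((s : ℝ) + 1)) (1 / ((s : ℝ) + 1))) :
    (⌈-(s : ℝ) * r - 1 / ((s : ℝ) + 1)⌉).toNat < s ∧
    -(s : ℝ) * r - ((⌈-(s : ℝ) * r - 1 / ((s : ℝ) + 1)⌉).toNat : ℝ) ∈
      Set.Icc (-(s : ℝ) / ((s : ℝ) + 1)) (1 / ((s : ℝ) + 1)) := by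
  have hs' : (1 : ℝ) < s := by exact_mod_cast hs
  have hpos : (0 : ℝ) < (s : ℝ) + 1 := by linarith
  set u : ℝ := 1 / ((s : ℝ) + 1) with hu_def
  have hu : u * ((s : ℝ) + 1) = 1 := by rw [hu_def, one_div, inv_mul_cancel₀ (ne_of_gt hpos)]
  have hu0 : 0 < u := by positivity
  have hsu : (s : ℝ) * u = 1 - u := by linarith [hu]
  have hlow : -(s : ℝ) / ((s : ℝ) + 1) = -(s : ℝ) * u := by
    rw [hu_def]; ring
  have hr1 : -(s : ℝ) * u ≤ r := by rw [← hlow]; exact hr.1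
  have hr2 : r ≤ u := hr.2
  set y : ℝ := -(s : ℝ) * r - u with hy_def
  have hceil_le : ⌈y⌉ ≤ (s : ℤ) - 1 := by
    rw [Int.ceil_le]
    push_cast
    nlinarith
  have hdig : (⌈y⌉).toNat < s := by omega
  refine ⟨hdig, ?_⟩
  rw [hlow]
  rcases le_or_gt 0 ⌈y⌉ with h0 | h0
  · have hc : ((⌈y⌉.toNat : ℕ) : ℝ) = (⌈y⌉ : ℝ) := by
      exact_mod_cast Int.toNat_of_nonneg h0
    have h1 : y ≤ (⌈y⌉ : ℝ) := Int.le_ceil y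
    have h2 : (⌈y⌉ : ℝ) < y + 1 := Int.ceil_lt_add_one y
    constructor
    · rw [hc]; linarith [hy_def, hsu]
    · rw [hc]; linarith [hy_def]
  · have hc : (⌈y⌉).toNat = 0 := by omega
    have h1 : y ≤ -1 := by
      have h : ⌈y⌉ ≤ -1 := by omega
      have h' := Int.ceil_le.mp h
      push_cast at h'
      linarith
    rw [hc]
    constructor
    · push_cast
      have hm : (s : ℝ) * r ≤ (s : ℝ) * u := by
        apply mul_le_mul_of_nonneg_left hr2 (by linarith)
      linarith [hm]
    · push_cast; linarith [hy_def, hu0]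

lemma negaRem_mem (s : ℕ) (hs : 1 < s) (x : ℝ)
    (hx : x ∈ Set.Icc (-(s : ℝ) / ((s : ℝ) + 1)) (1 / ((s : ℝ) + 1))) :
    ∀ n, negaRem s x n ∈ Set.Icc (-(s : ℝ) / ((s : ℝ) + 1)) (1 / ((s : ℝ) + 1)) := by
  intro n
  induction n with
  | zero => exact hx
  | succ n ih => exact (negaStep s hs _ ih).2

lemma negaTel (s : ℕ) (hs : 1 < s) (x : ℝ) :
    ∀ N, x - ∑ k ∈ Finset.range N, (negaDigit s x k : ℝ) / (-(s : ℝ)) ^ (k + 1)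
      = negaRem s x N / (-(s : ℝ)) ^ N := by
  have hne : (-(s : ℝ)) ≠ 0 := by
    have h1 : (1 : ℝ) < s := by exact_mod_cast hs
    intro h; linarith [neg_eq_zero.mp h]
  intro N
  induction N with
  | zero => simp [negaRem]
  | succ N ih =>
    rw [Finset.sum_range_succ]
    have : negaRem s x (N + 1)
        = -(s : ℝ) * negaRem s x N - (negaDigit s x N : ℝ) := rfl
    rw [this]
    rw [show x - (∑ k ∈ Finset.range N, (negaDigit s x k : ℝ) / (-(s : ℝ)) ^ (k + 1)
        + (negaDigit s x N : ℝ) / (-(s : ℝ)) ^ (N + 1))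
        = (x - ∑ k ∈ Finset.range N, (negaDigit s x k : ℝ) / (-(s : ℝ)) ^ (k + 1))
          - (negaDigit s x N : ℝ) / (-(s : ℝ)) ^ (N + 1) by ring, ih]
    field_simp
    ring

/-- Every `x ∈ [-s/(s+1), 1/(s+1)]` has a nega-s-adic representation
`x = Σ_{n≥1} α_n / (-s)^n` with digits `α_n ∈ {0,…,s-1}`. -/
theorem negaSAdic_representation (s : ℕ) (hs : 1 < s) (x : ℝ)
    (hx : x ∈ Set.Icc (-(s : ℝ) / ((s : ℝ) + 1)) (1 / ((s : ℝ) + 1))) :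
    ∃ α : ℕ → ℕ, (∀ n, α n < s) ∧
      x = ∑' n : ℕ, (α n : ℝ) / (-(s : ℝ)) ^ (n + 1) := by
  have hs' : (1 : ℝ) < s := by exact_mod_cast hs
  have hs0 : (0 : ℝ) < s := by linarith
  refine ⟨negaDigit s x, fun n => (negaStep s hs _ (negaRem_mem s hs x hx n)).1, ?_⟩
  set f : ℕ → ℝ := fun n => (negaDigit s x n : ℝ) / (-(s : ℝ)) ^ (n + 1) with hf
  have hbound : ∀ n, ‖f n‖ ≤ ((s : ℝ)⁻¹) ^ n := by
    intro n
    have hdn : negaDigit s x n < s := (negaStep s hs _ (negaRem_mem s hs x hx n)).1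
    have hd : (negaDigit s x n : ℝ) ≤ s := by
      exact_mod_cast le_of_lt hdn
    have habs : ‖f n‖ = (negaDigit s x n : ℝ) / (s : ℝ) ^ (n + 1) := by
      simp [hf, norm_div, norm_pow, abs_of_pos hs0]
    rw [habs, inv_pow, div_le_iff₀ (by positivity)]
    have hkey : ((s : ℝ) ^ n)⁻¹ * (s : ℝ) ^ (n + 1) = s := by
      field_simp [pow_succ]
      ring
    rw [hkey]
    exact hd
  have hsum : Summable f := by
    apply Summable.of_norm_bounded (summable_geometric_of_lt_one (by positivity)
      (by rw [inv_lt_one_iff₀]; right; exact hs')) hbound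
  have htend1 : Filter.Tendsto (fun N => ∑ k ∈ Finset.range N, f k)
      Filter.atTop (nhds (∑' n, f n)) := hsum.hasSum.tendsto_sum_nat
  have htend2 : Filter.Tendsto (fun N => ∑ k ∈ Finset.range N, f k)
      Filter.atTop (nhds x) := by
    have hrem : Filter.Tendsto (fun N => negaRem s x N / (-(s : ℝ)) ^ N)
        Filter.atTop (nhds 0) := by
      have hbnd2 : ∀ N, ‖negaRem s x N / (-(s : ℝ)) ^ N‖ ≤ ((s : ℝ)⁻¹) ^ N := by
        intro N
        have hm := negaRem_mem s hs x hx N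
        have h1 : |negaRem s x N| ≤ 1 := by
          rw [abs_le]
          refine ⟨?_, ?_⟩
          · have hl : -(s : ℝ) / ((s : ℝ) + 1) ≥ -1 := by
              rw [ge_iff_le, neg_le, ← neg_div, neg_neg, div_le_one (by linarith)]
              linarith
            linarith [hm.1]
          · have h2 : 1 / ((s : ℝ) + 1) ≤ 1 := by
              rw [div_le_one (by linarith)]; linarith
            linarith [hm.2]
        rw [norm_div, norm_pow, norm_neg, Real.norm_natCast, inv_pow, ← one_div,
          Real.norm_eq_abs]
        gcongr
      exact squeeze_zero_norm hbnd2
        (tendsto_pow_atTop_nhds_zero_of_lt_one (by positivity)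
          (by rw [inv_lt_one_iff₀]; right; exact hs'))
    have : (fun N => ∑ k ∈ Finset.range N, f k)
        = fun N => x - negaRem s x N / (-(s : ℝ)) ^ N := by
      funext N
      have := negaTel s hs x N
      linarith
    rw [this]
    have := Filter.Tendsto.const_sub x hrem
    simpa using this
  exact tendsto_nhds_unique htend2 htend1
end

section
/- Let N_B be a fixed subset of the positive integers and define ρ_n = 1 if n ∈ N_B and ρ_n = 2 otherwise. Set a'_0 = -Σ_{n ∈ N_B} (s-1)/s^n and a''_0 = 1 + a'_0. Then every real number x in [a'_0, a''_0] admits a representation x = Σ_{n=1}^∞ (-1)^{ρ_n} α_n / s^n with α_n ∈ {0,1,...,s-1}. -/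
open scoped Classical

private lemma exists_base_expansion (s : ℕ) (hs : 1 < s) (y : ℝ)
    (hy : y ∈ Set.Icc (0 : ℝ) 1) :
    ∃ β : ℕ → ℕ, (∀ n, β n < s) ∧
      HasSum (fun n : ℕ => (β n : ℝ) / (s : ℝ) ^ (n + 1)) y := by
  have hs1 : (1 : ℝ) < (s : ℝ) := by exact_mod_cast hs
  have hsp : (0 : ℝ) < (s : ℝ) := by linarith
  have hinv : (1 : ℝ) / s < 1 := by
    rw [div_lt_one hsp]; exact hs1
  have hinv0 : (0 : ℝ) ≤ 1 / s := by positivity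
  rcases eq_or_lt_of_le hy.2 with h1 | h1
  · -- y = 1 : use constant digit s - 1
    refine ⟨fun _ => s - 1, fun n => Nat.sub_lt (by omega) one_pos, ?_⟩
    have hgeo : HasSum (fun n : ℕ => (1 / (s : ℝ)) ^ n) (1 - 1 / s)⁻¹ :=
      hasSum_geometric_of_lt_one hinv0 hinv
    have := hgeo.mul_left (((s : ℝ) - 1) / s)
    have hterm : ∀ n : ℕ,
        ((s : ℝ) - 1) / s * (1 / (s : ℝ)) ^ n = ((s - 1 : ℕ) : ℝ) / (s : ℝ) ^ (n + 1) := by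
      intro n
      have hcast : ((s - 1 : ℕ) : ℝ) = (s : ℝ) - 1 := by
        have : 1 ≤ s := le_of_lt hs
        push_cast [this]; ring
      rw [hcast, div_pow, one_pow, div_mul_div_comm, mul_one, ← pow_succ']
    have hval : ((s : ℝ) - 1) / s * (1 - 1 / (s : ℝ))⁻¹ = 1 := by
      have h1s : (s : ℝ) ≠ 0 := ne_of_gt hsp
      have h2s : 1 - 1 / (s : ℝ) ≠ 0 := by
        have : (0:ℝ) < 1 - 1 / s := by
          rw [sub_pos]; exact hinv
        exact ne_of_gt this
      have heq2 : ((s : ℝ) - 1) / s = 1 - 1 / (s : ℝ) := by field_simp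
      rw [heq2, mul_inv_cancel₀ h2s]
    rw [hval] at this
    subst h1
    have hfe : (fun n : ℕ => ((s - 1 : ℕ) : ℝ) / (s : ℝ) ^ (n + 1))
        = fun n : ℕ => ((s : ℝ) - 1) / s * (1 / (s : ℝ)) ^ n :=
      funext fun n => (hterm n).symm
    show HasSum (fun n : ℕ => ((s - 1 : ℕ) : ℝ) / (s : ℝ) ^ (n + 1)) 1
    rw [hfe]
    exact this
  · -- y < 1 : usual floor construction
    have hy0 : 0 ≤ y := hy.1
    set D : ℕ → ℤ := fun n => ⌊y * (s : ℝ) ^ (n + 1)⌋ - s * ⌊y * (s : ℝ) ^ n⌋ with hD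
    have hDlow : ∀ n, 0 ≤ D n := by
      intro n
      have : ((s : ℤ) * ⌊y * (s : ℝ) ^ n⌋ : ℤ) ≤ ⌊y * (s : ℝ) ^ (n + 1)⌋ := by
        rw [Int.le_floor]
        push_cast
        have hfl : ((⌊y * (s : ℝ) ^ n⌋ : ℝ)) ≤ y * (s : ℝ) ^ n := Int.floor_le _
        calc (s : ℝ) * ⌊y * (s : ℝ) ^ n⌋ ≤ (s : ℝ) * (y * (s : ℝ) ^ n) := by
              exact mul_le_mul_of_nonneg_left hfl (le_of_lt hsp)
          _ = y * (s : ℝ) ^ (n + 1) := by ring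
      simp only [hD]; omega
    have hDhigh : ∀ n, D n < s := by
      intro n
      have : ⌊y * (s : ℝ) ^ (n + 1)⌋ < (s : ℤ) * ⌊y * (s : ℝ) ^ n⌋ + s := by
        rw [Int.floor_lt]
        push_cast
        have hfl : y * (s : ℝ) ^ n < ⌊y * (s : ℝ) ^ n⌋ + 1 := Int.lt_floor_add_one _
        calc y * (s : ℝ) ^ (n + 1) = (s : ℝ) * (y * (s : ℝ) ^ n) := by ring
          _ < (s : ℝ) * (⌊y * (s : ℝ) ^ n⌋ + 1) := by
              exact mul_lt_mul_of_pos_left hfl hsp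
          _ = (s : ℝ) * ⌊y * (s : ℝ) ^ n⌋ + s := by ring
      simp only [hD]; omega
    set β : ℕ → ℕ := fun n => (D n).toNat with hβ
    have hβcast : ∀ n, ((β n : ℤ)) = D n := fun n => Int.toNat_of_nonneg (hDlow n)
    have hβlt : ∀ n, β n < s := by
      intro n
      have := hDhigh n
      have h2 := hβcast n
      omega
    refine ⟨β, hβlt, ?_⟩
    -- partial sums
    have hpartial : ∀ N : ℕ, ∑ n ∈ Finset.range N, (β n : ℝ) / (s : ℝ) ^ (n + 1)
        = (⌊y * (s : ℝ) ^ N⌋ : ℝ) / (s : ℝ) ^ N := by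
      intro N
      induction N with
      | zero =>
        simp only [Finset.range_zero, Finset.sum_empty, pow_zero, mul_one, div_one]
        have : ⌊y⌋ = 0 := Int.floor_eq_zero_iff.2 ⟨hy0, h1⟩
        simp [this]
      | succ N ih =>
        rw [Finset.sum_range_succ, ih]
        have hcast : ((β N : ℝ)) = (⌊y * (s : ℝ) ^ (N + 1)⌋ : ℝ) - (s : ℝ) * (⌊y * (s : ℝ) ^ N⌋ : ℝ) := by
          have h2 : ((β N : ℤ) : ℝ) = ((D N : ℤ) : ℝ) := by rw [hβcast N]
          push_cast [hD] at h2
          linarith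
        rw [hcast]
        have hpow : (s : ℝ) ^ N ≠ 0 := by positivity
        have hpow1 : (s : ℝ) ^ (N + 1) ≠ 0 := by positivity
        field_simp
        ring
    -- summability
    have hsum : Summable (fun n : ℕ => (β n : ℝ) / (s : ℝ) ^ (n + 1)) := by
      apply Summable.of_nonneg_of_le (fun n => by positivity)
        (fun n => ?_) (summable_geometric_of_lt_one hinv0 hinv)
      have hle : (β n : ℝ) ≤ (s : ℝ) := by
        exact_mod_cast le_of_lt (hβlt n)
      calc (β n : ℝ) / (s : ℝ) ^ (n + 1) ≤ (s : ℝ) / (s : ℝ) ^ (n + 1) := by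
            apply div_le_div_of_nonneg_right hle ; positivity
        _ = (1 / (s : ℝ)) ^ n := by
            rw [div_pow, one_pow, pow_succ]
            field_simp
    -- partial sums tend to y
    have htendsto : Filter.Tendsto
        (fun N => ∑ n ∈ Finset.range N, (β n : ℝ) / (s : ℝ) ^ (n + 1))
        Filter.atTop (nhds y) := by
      have h2 : Filter.Tendsto (fun N : ℕ => (⌊y * (s : ℝ) ^ N⌋ : ℝ) / (s : ℝ) ^ N)
          Filter.atTop (nhds y) := by
        have hge : Filter.Tendsto (fun N : ℕ => (1 / (s : ℝ)) ^ N) Filter.atTop (nhds 0) :=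
          tendsto_pow_atTop_nhds_zero_of_lt_one hinv0 hinv
        have hsq : ∀ N : ℕ, ‖(⌊y * (s : ℝ) ^ N⌋ : ℝ) / (s : ℝ) ^ N - y‖ ≤ (1 / (s : ℝ)) ^ N := by
          intro N
          have hpow : (0 : ℝ) < (s : ℝ) ^ N := by positivity
          have hfl : ((⌊y * (s : ℝ) ^ N⌋ : ℝ)) ≤ y * (s : ℝ) ^ N := Int.floor_le _
          have hfl2 : y * (s : ℝ) ^ N < ⌊y * (s : ℝ) ^ N⌋ + 1 := Int.lt_floor_add_one _
          have hps : (1 / (s : ℝ)) ^ N = 1 / (s : ℝ) ^ N := by rw [div_pow, one_pow]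
          have e1 : (⌊y * (s : ℝ) ^ N⌋ : ℝ) / (s : ℝ) ^ N ≤ y := by
            rw [div_le_iff₀ hpow]; exact hfl
          have e2 : y ≤ (⌊y * (s : ℝ) ^ N⌋ : ℝ) / (s : ℝ) ^ N + 1 / (s : ℝ) ^ N := by
            rw [← add_div, le_div_iff₀ hpow]
            linarith
          rw [Real.norm_eq_abs, abs_le, hps]
          constructor <;> linarith
        have h0 : Filter.Tendsto
            (fun N : ℕ => (⌊y * (s : ℝ) ^ N⌋ : ℝ) / (s : ℝ) ^ N - y)
            Filter.atTop (nhds 0) := squeeze_zero_norm hsq hge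
        have := h0.add_const y
        simpa using this
      exact h2.congr (fun N => (hpartial N).symm)
    have := hsum.hasSum
    have heq : y = ∑' n, (β n : ℝ) / (s : ℝ) ^ (n + 1) :=
      tendsto_nhds_unique htendsto this.tendsto_sum_nat
    rw [heq]
    exact this

/-- Quasi-nega-s-adic representation: with `ρ_n = 1` for `n ∈ N_B` and `ρ_n = 2`
otherwise, every `x ∈ [a'_0, a''_0]`, where `a'_0 = -Σ_{n∈N_B} (s-1)/s^n` and
`a''_0 = 1 + a'_0`, can be written as `x = Σ_{n≥1} (-1)^{ρ_n} α_n / s^n` with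
digits `α_n ∈ {0,…,s-1}`. Position `n+1` corresponds to index `n : ℕ`. -/
theorem quasiNegaSAdic_representation (s : ℕ) (hs : 1 < s) (NB : Set ℕ)
    (hNB : ∀ n ∈ NB, 1 ≤ n) (x : ℝ)
    (hx : x ∈ Set.Icc
      (-(∑' n : ℕ, Set.indicator NB (fun m => ((s : ℝ) - 1) / (s : ℝ) ^ m) (n + 1)))
      (1 + -(∑' n : ℕ, Set.indicator NB (fun m => ((s : ℝ) - 1) / (s : ℝ) ^ m) (n + 1)))) :
    ∃ α : ℕ → ℕ, (∀ n, α n < s) ∧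
      x = ∑' n : ℕ,
        (-1 : ℝ) ^ (if (n + 1) ∈ NB then 1 else 2) * (α n : ℝ) / (s : ℝ) ^ (n + 1) := by
  have hs1 : (1 : ℝ) < (s : ℝ) := by exact_mod_cast hs
  have hsp : (0 : ℝ) < (s : ℝ) := by linarith
  have hinv : (1 : ℝ) / s < 1 := by rw [div_lt_one hsp]; exact hs1
  have hinv0 : (0 : ℝ) ≤ 1 / s := by positivity
  set h : ℕ → ℝ := fun n => Set.indicator NB (fun m => ((s : ℝ) - 1) / (s : ℝ) ^ m) (n + 1)
    with hh
  have hbound : ∀ n : ℕ, h n ≤ (1 / (s : ℝ)) ^ n := by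
    intro n
    have h1 : ((s : ℝ) - 1) / (s : ℝ) ^ (n + 1) ≤ (1 / (s : ℝ)) ^ n := by
      rw [div_pow, one_pow, div_le_div_iff₀ (by positivity) (by positivity), pow_succ]
      nlinarith [pow_pos hsp n]
    have h0 : (0 : ℝ) ≤ ((s : ℝ) - 1) / (s : ℝ) ^ (n + 1) :=
      div_nonneg (by linarith) (by positivity)
    simp only [hh, Set.indicator_apply]
    split
    · exact h1
    · positivity
  have hnn : ∀ n : ℕ, 0 ≤ h n := by
    intro n
    simp only [hh, Set.indicator_apply]
    split
    · exact div_nonneg (by linarith) (by positivity)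
    · exact le_refl 0
  have hhsum : Summable h :=
    Summable.of_nonneg_of_le hnn hbound (summable_geometric_of_lt_one hinv0 hinv)
  set T : ℝ := ∑' n, h n with hT
  set y : ℝ := x + T with hy
  have hyIcc : y ∈ Set.Icc (0 : ℝ) 1 := by
    obtain ⟨h1, h2⟩ := hx
    constructor <;> [linarith; linarith]
  obtain ⟨β, hβlt, hβsum⟩ := exists_base_expansion s hs y hyIcc
  refine ⟨fun n => if (n + 1) ∈ NB then s - 1 - β n else β n, ?_, ?_⟩
  · intro n
    dsimp only
    split
    · omega
    · exact hβlt n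
  · have hterm : ∀ n : ℕ,
        (-1 : ℝ) ^ (if (n + 1) ∈ NB then 1 else 2) *
          ((if (n + 1) ∈ NB then s - 1 - β n else β n : ℕ) : ℝ) / (s : ℝ) ^ (n + 1)
        = (β n : ℝ) / (s : ℝ) ^ (n + 1) - h n := by
      intro n
      simp only [hh, Set.indicator_apply]
      by_cases hmem : (n + 1) ∈ NB
      · simp only [hmem, if_true]
        have hble : β n ≤ s - 1 := by have := hβlt n; omega
        have hcast : ((s - 1 - β n : ℕ) : ℝ) = (s : ℝ) - 1 - (β n : ℝ) := by
          have h1 : 1 ≤ s := le_of_lt hs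
          push_cast [Nat.cast_sub hble, Nat.cast_sub h1]
          ring
        rw [hcast]
        ring
      · simp only [hmem, if_false]
        ring
    have hgsum : Summable (fun n : ℕ => (β n : ℝ) / (s : ℝ) ^ (n + 1)) := hβsum.summable
    calc x = y - T := by rw [hy]; ring
      _ = (∑' n, (β n : ℝ) / (s : ℝ) ^ (n + 1)) - ∑' n, h n := by
            rw [hβsum.tsum_eq]
      _ = ∑' n, ((β n : ℝ) / (s : ℝ) ^ (n + 1) - h n) := (Summable.tsum_sub hgsum hhsum).symm
      _ = _ := by
            exact tsum_congr (fun n => (hterm n).symm)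
end

section
/- Let (k_n) be a sequence of positive integers and for each n let θ_n : {0,1}^{k_n} → {0,1}^{k_n} be a bijection. Define f : [0,1] → [0,1] on binary expansions by applying θ_n to the n-th consecutive block of k_n binary digits and reading the result as a binary expansion. Then f is surjective: every y ∈ [0,1] has a pseudo-binary representation, i.e., y = Σ_{j=1}^∞ β_j/2^j where the blocks (β_{k_1+...+k_{n-1}+1},...,β_{k_1+...+k_n}) = θ_n(α_{k_1+...+k_{n-1}+1},...,α_{k_1+...+k_n}) for some binary digit sequence (α_j). -/
/-- `blockStart k n = k_1 + … + k_n`, the index where the `n`-th block begins. -/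
def blockStart (k : ℕ → ℕ) (n : ℕ) : ℕ := ∑ i ∈ Finset.range n, k i


lemma blockStart_succ (k : ℕ → ℕ) (n : ℕ) :
    blockStart k (n+1) = blockStart k n + k n := Finset.sum_range_succ k n

lemma le_blockStart (k : ℕ → ℕ) (hk : ∀ n, 0 < k n) (n : ℕ) : n ≤ blockStart k n := by
  induction n with
  | zero => simp [blockStart]
  | succ n ih => rw [blockStart_succ]; have := hk n; omega

lemma blockStart_mono (k : ℕ → ℕ) (hk : ∀ n, 0 < k n) : StrictMono (blockStart k) := by
  apply strictMono_nat_of_lt_succ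
  intro n; rw [blockStart_succ]; have := hk n; omega

lemma findGreatest_block (k : ℕ → ℕ) (hk : ∀ n, 0 < k n) (n j : ℕ)
    (h1 : blockStart k n ≤ j) (h2 : j < blockStart k (n+1)) :
    Nat.findGreatest (fun m => blockStart k m ≤ j) (j+1) = n := by
  rw [Nat.findGreatest_eq_iff]
  refine ⟨?_, fun _ => h1, fun m hm _ hP => ?_⟩
  · have := le_blockStart k hk n; omega
  · have : blockStart k (n+1) ≤ blockStart k m := (blockStart_mono k hk).monotone hm
    omega

lemma exists_binary (y : ℝ) (hy : y ∈ Set.Icc (0:ℝ) 1) :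
    ∃ β : ℕ → Fin 2, y = ∑' j : ℕ, ((β j : ℕ) : ℝ) / 2 ^ (j + 1) := by
  obtain ⟨hy0, hy1⟩ := hy
  rcases eq_or_lt_of_le hy1 with h1 | h1
  · refine ⟨fun _ => 1, ?_⟩
    simp only [Fin.val_one, Nat.cast_one]
    have hgeo := tsum_geometric_two' (1:ℝ)
    simp_rw [div_div, ← pow_succ'] at hgeo
    rw [h1, hgeo]
  · set F : ℕ → ℤ := fun N => ⌊(2:ℝ)^N * y⌋ with hF
    set b : ℕ → ℕ := fun j => (F (j+1)).toNat % 2 with hb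
    have hFnonneg : ∀ N, 0 ≤ F N := fun N =>
      Int.floor_nonneg.mpr (by positivity)
    have key : ∀ N, (b N : ℤ) = F (N+1) - 2 * F N := by
      intro N
      have hz : (2:ℝ)^(N+1) * y = 2 * ((2:ℝ)^N * y) := by ring
      have hl : 2 * F N ≤ F (N+1) := by
        rw [hF]
        simp only
        rw [hz, Int.le_floor]
        push_cast
        nlinarith [Int.floor_le ((2:ℝ)^N * y)]
      have hu : F (N+1) ≤ 2 * F N + 1 := by
        have : F (N+1) < 2 * F N + 2 := by
          rw [hF]; simp only
          rw [hz]
          apply Int.floor_lt.mpr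
          push_cast
          nlinarith [Int.lt_floor_add_one ((2:ℝ)^N * y)]
        omega
      have h0 := hFnonneg (N+1)
      simp only [hb]
      omega
    have partial_sum : ∀ N, ∑ j ∈ Finset.range N, (b j : ℝ) / 2 ^ (j+1)
        = (F N : ℝ) / 2 ^ N := by
      intro N
      induction N with
      | zero =>
        have hF0 : F 0 = 0 := by
          simp only [hF, pow_zero, one_mul]
          exact Int.floor_eq_zero_iff.mpr ⟨hy0, h1⟩
        simp [hF0]
      | succ N ih =>
        rw [Finset.sum_range_succ, ih]
        have hbN : (b N : ℝ) = (F (N+1) : ℝ) - 2 * (F N : ℝ) := by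
          exact_mod_cast key N
        rw [hbN]
        field_simp
        ring
    have hsummable : Summable fun j : ℕ => (b j : ℝ) / 2 ^ (j+1) := by
      apply Summable.of_nonneg_of_le (fun j => by positivity)
        (fun j => ?_) (summable_geometric_two.mul_left (1/2))
      have hb2 : b j ≤ 1 := by have : b j < 2 := Nat.mod_lt _ (by norm_num); omega
      have : (b j : ℝ) ≤ 1 := by exact_mod_cast hb2
      rw [div_eq_mul_inv]
      calc (b j : ℝ) * (2 ^ (j+1))⁻¹ ≤ 1 * (2 ^ (j+1))⁻¹ := by
            apply mul_le_mul_of_nonneg_right this (by positivity)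
        _ = 1/2 * (1/2)^j := by rw [pow_succ]; field_simp; rw [← mul_pow]; norm_num
    have htendsto : Filter.Tendsto (fun N => ∑ j ∈ Finset.range N, (b j : ℝ) / 2 ^ (j+1))
        Filter.atTop (nhds y) := by
      simp only [partial_sum]
      have hlow : ∀ N, y - (1/2:ℝ)^N ≤ (F N : ℝ) / 2 ^ N := by
        intro N
        have h2 : (2:ℝ)^N * y - 1 < (F N : ℝ) := by
          rw [hF]
          exact Int.sub_one_lt_floor _
        rw [le_div_iff₀ (by positivity : (0:ℝ) < 2^N)]
        have h3 : ((1:ℝ)/2)^N * 2^N = 1 := by rw [← mul_pow]; norm_num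
        nlinarith [pow_pos (by norm_num : (0:ℝ) < 2) N]
      have hhigh : ∀ N, (F N : ℝ) / 2 ^ N ≤ y := by
        intro N
        rw [div_le_iff₀ (by positivity)]
        have := Int.floor_le ((2:ℝ)^N * y)
        linarith [this]
      have hl : Filter.Tendsto (fun N : ℕ => y - (1/2:ℝ)^N) Filter.atTop (nhds y) := by
        have : Filter.Tendsto (fun N : ℕ => (1/2:ℝ)^N) Filter.atTop (nhds 0) :=
          tendsto_pow_atTop_nhds_zero_of_lt_one (by norm_num) (by norm_num)
        simpa using Filter.Tendsto.const_sub y this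
      exact tendsto_of_tendsto_of_tendsto_of_le_of_le hl tendsto_const_nhds hlow hhigh
    refine ⟨fun j => ⟨b j, Nat.mod_lt _ (by norm_num)⟩, ?_⟩
    exact tendsto_nhds_unique htendsto hsummable.hasSum.tendsto_sum_nat

/-- Surjectivity of the pseudo-binary numeral system: given block lengths `(k_n)`
and block bijections `θ_n : {0,1}^{k_n} → {0,1}^{k_n}`, every `y ∈ [0,1]` has a
pseudo-binary representation `y = Σ_{j≥1} β_j/2^j` where each block of `(β_j)` is
the `θ_n`-image of the corresponding block of some binary sequence `(α_j)`. -/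
theorem pseudoBinary_representation (k : ℕ → ℕ) (hk : ∀ n, 0 < k n)
    (θ : ∀ n, (Fin (k n) → Fin 2) → (Fin (k n) → Fin 2))
    (hθ : ∀ n, Function.Bijective (θ n))
    (y : ℝ) (hy : y ∈ Set.Icc (0 : ℝ) 1) :
    ∃ α β : ℕ → Fin 2,
      (∀ n : ℕ, ∀ i : Fin (k n),
        β (blockStart k n + i) = θ n (fun i => α (blockStart k n + i)) i) ∧
      y = ∑' j : ℕ, ((β j : ℕ) : ℝ) / 2 ^ (j + 1) := by
  obtain ⟨β, hβ⟩ := exists_binary y hy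
  set e : ∀ n, ((Fin (k n) → Fin 2) ≃ (Fin (k n) → Fin 2)) :=
    fun n => Equiv.ofBijective (θ n) (hθ n) with he
  classical
  set fg : ℕ → ℕ := fun j => Nat.findGreatest (fun m => blockStart k m ≤ j) (j+1) with hfgdef
  set α : ℕ → Fin 2 := fun j =>
    if h : j - blockStart k (fg j) < k (fg j) then
      (e (fg j)).symm (fun i => β (blockStart k (fg j) + i)) ⟨j - blockStart k (fg j), h⟩
    else 0 with hαdef
  refine ⟨α, β, fun n i => ?_, hβ⟩
  have hfgi : ∀ i : Fin (k n), fg (blockStart k n + (i:ℕ)) = n := by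
    intro i
    rw [hfgdef]
    exact findGreatest_block k hk n _ (by omega) (by rw [blockStart_succ]; omega)
  have halpha : (fun i : Fin (k n) => α (blockStart k n + (i:ℕ)))
      = (e n).symm (fun i => β (blockStart k n + (i:ℕ))) := by
    funext i
    rw [hαdef]
    simp only []
    have h1 := hfgi i
    revert h1
    generalize fg (blockStart k n + (i:ℕ)) = m
    intro h1
    subst h1
    rw [dif_pos (by simpa using i.isLt)]
    congr 1
    exact Fin.ext (by simp)
  rw [halpha]
  conv_rhs => rw [show θ n = ⇑(e n) from rfl]
  exact (congrFun ((e n).apply_symm_apply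
    (fun i : Fin (k n) => β (blockStart k n + (i:ℕ)))) i).symm
end

section
/- Let (k_n) be a sequence of positive integers and θ_n : {0,1}^{k_n} → {0,1}^{k_n} bijections, and f the corresponding block-permutation map on binary expansions. Then the Lebesgue integral ∫_0^1 f(x) dλ(x) equals 1/2. -/
/-- The `j`-th binary digit of `x` (period-(0) convention for binary rationals). -/
noncomputable def bDigit (x : ℝ) (j : ℕ) : Fin 2 :=
  ⟨(⌊x * 2 ^ (j + 1)⌋).toNat % 2, Nat.mod_lt _ (by norm_num)⟩

/-- The index of the block containing position `j`. -/
def blockOf (k : ℕ → ℕ) (j : ℕ) : ℕ :=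
  Nat.findGreatest (fun m => blockStart k m ≤ j) j

/-- The pseudo-binary block-permutation map `f` determined by block lengths
`(k_n)` and block bijections `(θ_n)`: it applies `θ_n` to the `n`-th block of
`k_n` binary digits of `x` and reads off the resulting binary expansion
(`1` is sent to `1`). -/
noncomputable def pseudoF (k : ℕ → ℕ)
    (θ : ∀ n, (Fin (k n) → Fin 2) → (Fin (k n) → Fin 2)) (x : ℝ) : ℝ :=
  if x = 1 then 1 else
    ∑' j : ℕ,
      if h : j - blockStart k (blockOf k j) < k (blockOf k j) then
        (((θ (blockOf k j)
            (fun i => bDigit x (blockStart k (blockOf k j) + i))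
            ⟨j - blockStart k (blockOf k j), h⟩ : Fin 2) : ℕ) : ℝ) / 2 ^ (j + 1)
      else 0

open MeasureTheory

/- ### Auxiliary lemmas -/

lemma self_le_blockStart (k : ℕ → ℕ) (hk : ∀ n, 0 < k n) (m : ℕ) : m ≤ blockStart k m := by
  calc m = ∑ _i ∈ Finset.range m, 1 := by simp
  _ ≤ blockStart k m := Finset.sum_le_sum fun i _ => hk i

lemma blockOf_spec (k : ℕ → ℕ) (hk : ∀ n, 0 < k n) (j : ℕ) :
    blockStart k (blockOf k j) ≤ j ∧ j - blockStart k (blockOf k j) < k (blockOf k j) := by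
  have h1 : blockStart k (blockOf k j) ≤ j :=
    Nat.findGreatest_spec (P := fun m => blockStart k m ≤ j) (Nat.zero_le j)
      (by simp [blockStart])
  refine ⟨h1, ?_⟩
  have h2 : ¬ blockStart k (blockOf k j + 1) ≤ j := by
    intro hle
    have : blockOf k j + 1 ≤ blockOf k j :=
      Nat.le_findGreatest ((self_le_blockStart k hk _).trans hle) hle
    omega
  have hsucc : blockStart k (blockOf k j + 1) = blockStart k (blockOf k j) + k (blockOf k j) :=
    Finset.sum_range_succ k _
  omega

lemma measurable_bDigit (j : ℕ) : Measurable (fun x => bDigit x j) := by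
  have h1 : Measurable fun x : ℝ => ⌊x * 2 ^ (j + 1)⌋ :=
    (measurable_id.mul_const _).floor
  exact (measurable_from_top
    (f := fun z : ℤ => (⟨z.toNat % 2, Nat.mod_lt _ (by norm_num)⟩ : Fin 2))).comp h1

lemma measurable_G_comp (s m : ℕ) (G : (Fin m → Fin 2) → ℝ) :
    Measurable (fun x : ℝ => G (fun i => bDigit x (s + i))) :=
  (measurable_of_countable G).comp (measurable_pi_lambda _ (fun i => measurable_bDigit (s + i)))

lemma bDigit_of_mem (s m t : ℕ) (i : Fin m) (x : ℝ)
    (hx1 : (t : ℝ) / 2 ^ (s + m) ≤ x) (hx2 : x < ((t : ℝ) + 1) / 2 ^ (s + m)) :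
    bDigit x (s + i) = ⟨t / 2 ^ (m - 1 - i) % 2, Nat.mod_lt _ (by norm_num)⟩ := by
  have hi : (i : ℕ) < m := i.isLt
  have hexp : s + m = (s + i + 1) + (m - 1 - i) := by omega
  set e : ℕ := m - 1 - i with he
  have key : ⌊x * 2 ^ (s + i + 1)⌋ = (t / 2 ^ e : ℕ) := by
    rw [Int.floor_eq_iff]
    have h2 : (0:ℝ) < 2 ^ e := by positivity
    have hN : (2:ℝ) ^ (s + m) = 2 ^ (s + i + 1) * 2 ^ e := by
      rw [hexp, pow_add]
    constructor
    · have hdiv : ((t / 2 ^ e : ℕ) : ℝ) * 2 ^ e ≤ (t : ℝ) := by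
        calc ((t / 2 ^ e : ℕ) : ℝ) * 2 ^ e = ((t / 2 ^ e * 2 ^ e : ℕ) : ℝ) := by push_cast; ring
        _ ≤ (t : ℝ) := by exact_mod_cast Nat.div_mul_le_self t (2 ^ e)
      have := mul_le_mul_of_nonneg_right hx1 (le_of_lt (by positivity : (0:ℝ) < 2 ^ (s + i + 1)))
      rw [div_mul_eq_mul_div, hN] at this
      calc ((t / 2 ^ e : ℕ) : ℝ) ≤ (t : ℝ) / 2 ^ e := by
            rw [le_div_iff₀ h2]; exact hdiv
      _ = (t : ℝ) * 2 ^ (s + i + 1) / (2 ^ (s + i + 1) * 2 ^ e) := by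
            field_simp
      _ ≤ x * 2 ^ (s + i + 1) := this
    · have hlt : (t : ℝ) + 1 ≤ ((t / 2 ^ e : ℕ) + 1 : ℝ) * 2 ^ e := by
        have : t + 1 ≤ (t / 2 ^ e + 1) * 2 ^ e := by
          have := Nat.mod_lt t (show 0 < 2 ^ e by positivity)
          have := Nat.div_add_mod t (2 ^ e)
          nlinarith
        calc (t : ℝ) + 1 = ((t + 1 : ℕ) : ℝ) := by push_cast; ring
        _ ≤ (((t / 2 ^ e + 1) * 2 ^ e : ℕ) : ℝ) := by exact_mod_cast this
        _ = ((t / 2 ^ e : ℕ) + 1 : ℝ) * 2 ^ e := by push_cast; ring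
      have := mul_lt_mul_of_pos_right hx2 (by positivity : (0:ℝ) < 2 ^ (s + i + 1))
      rw [div_mul_eq_mul_div, hN] at this
      calc x * 2 ^ (s + i + 1) < ((t:ℝ) + 1) * 2 ^ (s + i + 1) / (2 ^ (s + i + 1) * 2 ^ e) := this
      _ = ((t:ℝ) + 1) / 2 ^ e := by field_simp
      _ ≤ ((t / 2 ^ e : ℕ) : ℝ) + 1 := by
            rw [div_le_iff₀ h2]; exact hlt
  unfold bDigit
  ext
  simp only [Fin.val_mk]
  rw [key, Int.toNat_natCast]

/-- The digit pattern of the natural number `t`, of length `m`. -/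
def pattern (m t : ℕ) : Fin m → Fin 2 :=
  fun i => ⟨t / 2 ^ (m - 1 - i) % 2, Nat.mod_lt _ (by norm_num)⟩

lemma pattern_mod (m t : ℕ) : pattern m (t % 2 ^ m) = pattern m t := by
  funext i
  have hi : (i : ℕ) < m := i.isLt
  set e : ℕ := m - 1 - i with he
  have h2 : 2 ^ m = 2 ^ e * 2 ^ (m - e) := by rw [← pow_add]; congr 1; omega
  unfold pattern
  ext
  simp only [Fin.val_mk]
  rw [h2, Nat.mod_mul_right_div_self,
    Nat.mod_mod_of_dvd _ (dvd_pow_self 2 (by omega : m - e ≠ 0))]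

lemma sum_range_pow_pattern {M : Type*} [AddCommMonoid M] (m : ℕ) (G : (Fin m → Fin 2) → M) :
    ∑ t ∈ Finset.range (2 ^ m), G (pattern m t) = ∑ v : Fin m → Fin 2, G v := by
  rw [Finset.sum_range (fun t => G (pattern m t))]
  have key : ∀ u : Fin (2 ^ m), pattern m (u : ℕ) = (finFunctionFinEquiv.symm u) ∘ Fin.rev := by
    intro u
    funext i
    unfold pattern
    ext
    simp [finFunctionFinEquiv, Fin.val_rev]
    have h : m - 1 - (i:ℕ) = m - ((i:ℕ)+1) := by omega
    rw [h]
  simp_rw [key]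
  rw [Equiv.sum_comp finFunctionFinEquiv.symm (fun v => G (v ∘ Fin.rev))]
  exact Fintype.sum_bijective (· ∘ Fin.rev)
    (Function.Involutive.bijective (fun v => by funext i; simp [Fin.rev_rev])) _ _ (fun v => rfl)

lemma sum_range_mul_mod {M : Type*} [AddCommMonoid M] (a b : ℕ) (f : ℕ → M) :
    ∑ t ∈ Finset.range (a * b), f (t % b) = a • ∑ u ∈ Finset.range b, f (u % b) := by
  induction a with
  | zero => simp
  | succ a ih =>
    rw [Nat.succ_mul, Finset.range_add, Finset.sum_union, ih, Finset.sum_map, succ_nsmul]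
    · congr 1
      apply Finset.sum_congr rfl
      intro u hu
      simp only [addLeftEmbedding_apply]
      congr 1
      rw [mul_comm, Nat.mul_add_mod]
    · rw [Finset.disjoint_left]
      intro x hx hx2
      simp only [Finset.mem_map, Finset.mem_range, addLeftEmbedding_apply] at hx hx2
      omega

lemma sum_coord (m : ℕ) (i : Fin m) :
    ∑ v : Fin m → Fin 2, ((v i : ℕ) : ℝ) = 2 ^ m / 2 := by
  set σ : (Fin m → Fin 2) → (Fin m → Fin 2) := fun v => Function.update v i (v i + 1) with hσ
  have hinv : Function.Involutive σ := by
    intro v; funext j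
    rcases eq_or_ne j i with rfl | h
    · simp only [hσ, Function.update_self]
      have : ∀ a : Fin 2, a + 1 + 1 = a := by decide
      exact this _
    · simp [hσ, Function.update_of_ne h]
  have key : ∀ v : Fin m → Fin 2, ((v i : ℕ) : ℝ) + (((σ v) i : ℕ) : ℝ) = 1 := by
    intro v
    have hn : ∀ a : Fin 2, ((a : ℕ) + ((a + 1 : Fin 2) : ℕ)) = 1 := by decide
    have h := hn (v i)
    simp only [hσ, Function.update_self]
    exact_mod_cast h
  have h2 : ∑ v : Fin m → Fin 2, ((v i : ℕ) : ℝ)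
      = ∑ v : Fin m → Fin 2, (((σ v) i : ℕ) : ℝ) :=
    (Fintype.sum_bijective σ hinv.bijective _ _ (fun v => rfl)).symm
  have h3 : 2 * ∑ v : Fin m → Fin 2, ((v i : ℕ) : ℝ) = 2 ^ m := by
    calc 2 * ∑ v : Fin m → Fin 2, ((v i : ℕ) : ℝ)
        = ∑ v : Fin m → Fin 2, (((v i : ℕ) : ℝ) + (((σ v) i : ℕ) : ℝ)) := by
          rw [Finset.sum_add_distrib, ← h2]; ring
      _ = ∑ _v : Fin m → Fin 2, (1:ℝ) := Finset.sum_congr rfl fun v _ => key v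
      _ = 2 ^ m := by simp [Fintype.card_fun]
  linarith

lemma integral_block (s m : ℕ) (G : (Fin m → Fin 2) → ℝ) :
    ∫ x in Set.Ioc (0:ℝ) 1, G (fun i => bDigit x (s + i))
      = (∑ v : Fin m → Fin 2, G v) / 2 ^ m := by
  set N : ℕ := 2 ^ (s + m) with hN
  have hN0 : (0:ℝ) < (N : ℝ) := by positivity
  set a : ℕ → ℝ := fun t => (t : ℝ) / N with ha
  set H : ℝ → ℝ := fun x => G (fun i => bDigit x (s + i)) with hH
  have hEq : ∀ t : ℕ, Set.EqOn H (fun _ => G (pattern m t)) (Set.Ioo (a t) (a (t+1))) := by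
    intro t x hx
    show G _ = G (pattern m t)
    congr 1
    funext i
    have h1 : (t : ℝ) / 2 ^ (s + m) ≤ x := le_of_lt (by exact_mod_cast hx.1)
    have h2 : x < ((t : ℝ) + 1) / 2 ^ (s + m) := by
      have := hx.2
      rw [ha] at this
      push_cast at this
      exact_mod_cast this
    exact bDigit_of_mem s m t i x h1 h2
  have hmono : ∀ t : ℕ, a t ≤ a (t + 1) := by
    intro t
    simp only [ha]
    gcongr
    push_cast
    linarith
  have hIntOn : ∀ t : ℕ, IntegrableOn H (Set.Ioo (a t) (a (t+1))) volume :=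
    fun t => ((integrableOn_const_iff).mpr (Or.inr measure_Ioo_lt_top)).congr_fun
      (fun x hx => (hEq t hx).symm) measurableSet_Ioo
  have hInt : ∀ t : ℕ, IntervalIntegrable H volume (a t) (a (t+1)) := by
    intro t
    rw [intervalIntegrable_iff_integrableOn_Ioc_of_le (hmono t)]
    exact (hIntOn t).congr_set_ae Ioo_ae_eq_Ioc.symm
  have hpiece : ∀ t : ℕ, ∫ x in (a t)..(a (t+1)), H x = G (pattern m t) / N := by
    intro t
    rw [intervalIntegral.integral_of_le (hmono t), integral_Ioc_eq_integral_Ioo,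
      setIntegral_congr_fun measurableSet_Ioo (hEq t), setIntegral_const,
      measureReal_def, Real.volume_Ioo]
    have hd : a (t+1) - a t = 1 / N := by
      simp only [ha]; push_cast; field_simp; ring
    rw [hd, ENNReal.toReal_ofReal (by positivity)]
    rw [smul_eq_mul]
    ring
  have hsum := intervalIntegral.sum_integral_adjacent_intervals (a := a) (μ := volume)
    (f := H) (n := N) (fun t _ => hInt t)
  have ha0 : a 0 = 0 := by simp [ha]
  have haN : a N = 1 := by
    simp only [ha]; field_simp
  rw [ha0, haN] at hsum
  have hIoc : ∫ x in Set.Ioc (0:ℝ) 1, H x = ∫ x in (0:ℝ)..1, H x :=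
    (intervalIntegral.integral_of_le (by norm_num)).symm
  rw [hIoc, ← hsum]
  have : ∀ t ∈ Finset.range N, ∫ x in (a t)..(a (t+1)), H x = G (pattern m t) / N :=
    fun t _ => hpiece t
  rw [Finset.sum_congr rfl this, ← Finset.sum_div]
  have hcount : ∑ t ∈ Finset.range N, G (pattern m t)
      = (2 ^ s : ℕ) • ∑ v : Fin m → Fin 2, G v := by
    have h1 : ∀ t, G (pattern m t) = G (pattern m (t % 2 ^ m)) := fun t => by rw [pattern_mod]
    calc ∑ t ∈ Finset.range N, G (pattern m t)
        = ∑ t ∈ Finset.range (2 ^ s * 2 ^ m), (fun u => G (pattern m u)) (t % 2 ^ m) := by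
          rw [hN, pow_add]
          exact Finset.sum_congr rfl fun t _ => h1 t
      _ = (2 ^ s : ℕ) • ∑ u ∈ Finset.range (2 ^ m), (fun u => G (pattern m u)) (u % 2 ^ m) :=
          sum_range_mul_mod (2 ^ s) (2 ^ m) (fun u => G (pattern m u))
      _ = (2 ^ s : ℕ) • ∑ v : Fin m → Fin 2, G v := by
          rw [← sum_range_pow_pattern m (fun v => G v)]
          congr 1
          exact Finset.sum_congr rfl fun u hu => (h1 u).symm
  rw [hcount]
  have hNc : (N : ℝ) = 2 ^ s * 2 ^ m := by rw [hN]; push_cast [pow_add]; ring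
  rw [nsmul_eq_mul, hNc]
  push_cast
  have h2s : (0:ℝ) < 2 ^ s := by positivity
  field_simp

/-- The Lebesgue integral of the block-permutation map `f` over `[0,1]`
equals `1/2`. -/
theorem pseudoF_integral_eq_half (k : ℕ → ℕ) (hk : ∀ n, 0 < k n)
    (θ : ∀ n, (Fin (k n) → Fin 2) → (Fin (k n) → Fin 2))
    (hθ : ∀ n, Function.Bijective (θ n)) :
    ∫ x in Set.Icc (0 : ℝ) 1, pseudoF k θ x = 1 / 2 := by
  classical
  set g : ℕ → ℝ → ℝ := fun j x =>
    ((θ (blockOf k j) (fun i => bDigit x (blockStart k (blockOf k j) + i))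
        ⟨j - blockStart k (blockOf k j), (blockOf_spec k hk j).2⟩ : Fin 2) : ℕ) / 2 ^ (j + 1)
    with hg
  have hpF : ∀ x : ℝ, x ≠ 1 → pseudoF k θ x = ∑' j : ℕ, g j x := by
    intro x hx
    rw [pseudoF, if_neg hx]
    refine tsum_congr fun j => ?_
    rw [dif_pos (blockOf_spec k hk j).2]
  -- replace the integrand a.e.
  have hae : ∀ᵐ x ∂(volume.restrict (Set.Icc (0:ℝ) 1)), pseudoF k θ x = ∑' j : ℕ, g j x := by
    have h1 : ∀ᵐ x : ℝ ∂volume, x ≠ 1 := by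
      refine MeasureTheory.ae_iff.2 ?_
      simpa using measure_singleton (1:ℝ)
    exact ae_restrict_of_ae (h1.mono fun x hx => hpF x hx)
  rw [integral_congr_ae hae]
  -- measurability of each term
  have hmeas : ∀ j : ℕ, Measurable (g j) := by
    intro j
    exact (measurable_G_comp (blockStart k (blockOf k j)) (k (blockOf k j))
      (fun v => ((θ (blockOf k j) v
        ⟨j - blockStart k (blockOf k j), (blockOf_spec k hk j).2⟩ : Fin 2) : ℕ))).div_const _
  -- pointwise bound
  have hbound : ∀ j : ℕ, ∀ x : ℝ, |g j x| ≤ (1/2 : ℝ) ^ (j + 1) := by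
    intro j x
    rw [hg]
    have h1 : ((θ (blockOf k j) (fun i => bDigit x (blockStart k (blockOf k j) + i))
        ⟨j - blockStart k (blockOf k j), (blockOf_spec k hk j).2⟩ : Fin 2) : ℕ) ≤ 1 :=
      Nat.lt_succ_iff.mp (Fin.is_lt _)
    rw [abs_of_nonneg (by positivity), div_pow, one_pow]
    exact div_le_div₀ zero_le_one (by exact_mod_cast h1) (by positivity) le_rfl
  -- the series of lintegrals is finite
  have hlin : ∀ j : ℕ, ∫⁻ x, ‖g j x‖₊ ∂(volume.restrict (Set.Icc (0:ℝ) 1))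
      ≤ ENNReal.ofReal ((1/2:ℝ) ^ (j+1)) := by
    intro j
    calc ∫⁻ x, ‖g j x‖₊ ∂(volume.restrict (Set.Icc (0:ℝ) 1))
        ≤ ∫⁻ _x, ENNReal.ofReal ((1/2:ℝ)^(j+1)) ∂(volume.restrict (Set.Icc (0:ℝ) 1)) := by
          apply lintegral_mono
          intro x
          simp only [← enorm_eq_nnnorm, Real.enorm_eq_ofReal_abs]
          exact ENNReal.ofReal_le_ofReal (hbound j x)
      _ = ENNReal.ofReal ((1/2:ℝ)^(j+1)) * volume (Set.Icc (0:ℝ) 1) := by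
          rw [MeasureTheory.lintegral_const, Measure.restrict_apply_univ]
      _ ≤ ENNReal.ofReal ((1/2:ℝ)^(j+1)) * 1 := by
          gcongr
          rw [Real.volume_Icc]
          norm_num
      _ = ENNReal.ofReal ((1/2:ℝ)^(j+1)) := mul_one _
  have hsummable : Summable (fun j : ℕ => (1/2:ℝ) ^ (j+1)) := by
    have h := summable_geometric_of_lt_one (by norm_num : (0:ℝ) ≤ 1/2) (by norm_num)
    simp_rw [pow_succ]
    exact h.mul_right _
  have htop : (∑' j : ℕ, ∫⁻ x, ‖g j x‖₊ ∂(volume.restrict (Set.Icc (0:ℝ) 1))) ≠ ⊤ :=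
    ne_top_of_le_ne_top
      (by rw [← ENNReal.ofReal_tsum_of_nonneg (fun j => by positivity) hsummable]
          exact ENNReal.ofReal_ne_top)
      (ENNReal.tsum_le_tsum hlin)
  rw [MeasureTheory.integral_tsum (fun j => (hmeas j).aestronglyMeasurable) htop]
  -- compute each integral
  have hint : ∀ j : ℕ, ∫ x in Set.Icc (0:ℝ) 1, g j x = (1/4 : ℝ) * (1/2) ^ j := by
    intro j
    set n := blockOf k j with hn
    set sb := blockStart k n with hsb
    set Gj : (Fin (k n) → Fin 2) → ℝ := fun v =>
      ((θ n v ⟨j - sb, (blockOf_spec k hk j).2⟩ : Fin 2) : ℕ) with hGj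
    have hgj : g j = fun x => Gj (fun i => bDigit x (sb + i)) / 2 ^ (j+1) := rfl
    rw [MeasureTheory.integral_Icc_eq_integral_Ioc, hgj, integral_div,
      integral_block sb (k n) Gj]
    have hsumG : ∑ v : Fin (k n) → Fin 2, Gj v = 2 ^ (k n) / 2 := by
      rw [hGj]
      rw [Fintype.sum_bijective (θ n) (hθ n) _
        (fun w => (((w ⟨j - sb, (blockOf_spec k hk j).2⟩ : Fin 2) : ℕ) : ℝ)) (fun v => rfl)]
      exact sum_coord (k n) _
    rw [hsumG]
    have h2m : (0:ℝ) < 2 ^ (k n) := by positivity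
    field_simp
    rw [one_div, inv_pow, pow_succ', ← mul_assoc, mul_inv_cancel_right₀ (pow_ne_zero j two_ne_zero)]; norm_num
  rw [tsum_congr hint, tsum_mul_left, tsum_geometric_two]
  norm_num
end
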